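/- For the sine-wave reference CRN, the differences a = x_{A+} − x_{A−} and ρ = x_{R+} − x_{R−} satisfy the harmonic oscillator system ∂t ρ = k·a, ∂t a = −k·ρ; hence x_{R+}(t) − x_{R−}(t) = ρ(0)·cos(kt) + a(0)·sin(kt) is an exact sinusoid. -/

import Mathlib

/-- The sine-wave reference CRN: the dual-rail differences satisfy a harmonic
oscillator, so the encoded reference signal is an exact sinusoid. -/
theorem sine_reference_exact
    (xAp xAm xRp xRm : ℝ → ℝ) (k : ℝ) (hk : 0 < k)
    (hRp : ∀ t, HasDerivAt xRp (k * xAp t - k * xRp t * xRm t) t)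
    (hRm : ∀ t, HasDerivAt xRm (k * xAm t - k * xRp t * xRm t) t)
    (hAp : ∀ t, HasDerivAt xAp (k * xRm t - k * xAp t * xAm t) t)
    (hAm : ∀ t, HasDerivAt xAm (k * xRp t - k * xAp t * xAm t) t) :
    (∀ t, HasDerivAt (fun u => xRp u - xRm u) (k * (xAp t - xAm t)) t) ∧
    (∀ t, HasDerivAt (fun u => xAp u - xAm u) (-(k * (xRp t - xRm t))) t) ∧
    (∀ t, xRp t - xRm t =
      (xRp 0 - xRm 0) * Real.cos (k * t) + (xAp 0 - xAm 0) * Real.sin (k * t)) := by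
  have hf : ∀ t, HasDerivAt (fun u => xRp u - xRm u) (k * (xAp t - xAm t)) t := by
    intro t
    have := (hRp t).sub (hRm t)
    convert this using 1
    any_goals rfl
    ring
  have hg : ∀ t, HasDerivAt (fun u => xAp u - xAm u) (-(k * (xRp t - xRm t))) t := by
    intro t
    have := (hAp t).sub (hAm t)
    convert this using 1
    any_goals rfl
    ring
  refine ⟨hf, hg, ?_⟩
  set f : ℝ → ℝ := fun u => xRp u - xRm u with hfdef
  set g : ℝ → ℝ := fun u => xAp u - xAm u with hgdef
  -- u = f cos(kt) - g sin(kt) is constant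
  have hcos : ∀ t : ℝ, HasDerivAt (fun u : ℝ => Real.cos (k * u)) (-(Real.sin (k * t)) * k) t := by
    intro t
    exact (Real.hasDerivAt_cos (k * t)).comp t ((hasDerivAt_id t).const_mul k)
      |>.congr_deriv (by ring)
  have hsin : ∀ t : ℝ, HasDerivAt (fun u : ℝ => Real.sin (k * u)) (Real.cos (k * t) * k) t := by
    intro t
    exact (Real.hasDerivAt_sin (k * t)).comp t ((hasDerivAt_id t).const_mul k)
      |>.congr_deriv (by ring)
  have hu : ∀ t : ℝ, HasDerivAt
      (fun u => f u * Real.cos (k * u) - g u * Real.sin (k * u)) 0 t := by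
    intro t
    have := ((hf t).mul (hcos t)).sub ((hg t).mul (hsin t))
    convert this using 1
    any_goals rfl
    ring
  have hv : ∀ t : ℝ, HasDerivAt
      (fun u => f u * Real.sin (k * u) + g u * Real.cos (k * u)) 0 t := by
    intro t
    have := ((hf t).mul (hsin t)).add ((hg t).mul (hcos t))
    convert this using 1
    any_goals rfl
    ring
  have hconst : ∀ (F : ℝ → ℝ), (∀ t, HasDerivAt F 0 t) → ∀ t, F t = F 0 := by
    intro F hF t
    have : ∀ x : ℝ, F x = F x := fun _ => rfl
    have := is_const_of_deriv_eq_zero (fun x => (hF x).differentiableAt)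
      (fun x => (hF x).deriv) t 0
    exact this
  have hu0 := hconst _ hu
  have hv0 := hconst _ hv
  intro t
  have h1 := hu0 t
  have h2 := hv0 t
  simp only [Real.cos_zero, Real.sin_zero, mul_zero, mul_one, sub_zero, add_zero, mul_comm] at h1 h2
  -- f t = (f cos - g sin) cos + (f sin + g cos) sin
  have key : f t = (f t * Real.cos (k * t) - g t * Real.sin (k * t)) * Real.cos (k * t)
      + (f t * Real.sin (k * t) + g t * Real.cos (k * t)) * Real.sin (k * t) := by
    have := Real.sin_sq_add_cos_sq (k * t)
    linear_combination (-(f t)) * this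
  calc f t = _ := key
    _ = f 0 * Real.cos (k * t) + g 0 * Real.sin (k * t) := by rw [h1, h2]; ring
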